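/- Let K ⊂ ℝ be a compact set, let μ be a nonnegative Borel measure on ℝ with support contained in K, and let ν be any nonnegative Borel measure on ℝ with finite moments of all orders. If ∫ x^n dμ = ∫ x^n dν for all n ≥ 0, then μ = ν. -/

import Mathlib

open MeasureTheory

/-- A finite nonnegative Borel measure supported in a compact set `K ⊆ ℝ` is determined
by its moments: any nonnegative Borel measure on `ℝ` with finite moments of all orders
and the same moment sequence coincides with it. -/
theorem compactly_supported_measure_determinate (K : Set ℝ) (hK : IsCompact K)
    (μ : Measure ℝ) [IsFiniteMeasure μ] (hμsupp : μ Kᶜ = 0)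
    (ν : Measure ℝ) (hν : ∀ n : ℕ, Integrable (fun x : ℝ => x ^ n) ν)
    (heq : ∀ n : ℕ, ∫ x, x ^ n ∂μ = ∫ x, x ^ n ∂ν) :
    μ = ν := by
  -- choose a radius `R ≥ 1` with `K ⊆ Icc (-R) R`
  obtain ⟨r, hr⟩ := (Metric.isBounded_iff_subset_closedBall 0).mp hK.isBounded
  set R : ℝ := max r 1 with hRdef
  have hR1 : (1 : ℝ) ≤ R := le_max_right _ _
  have hR0 : (0 : ℝ) < R := lt_of_lt_of_le one_pos hR1
  have hKR : K ⊆ Set.Icc (-R) R := by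
    intro x hx
    have := hr hx
    rw [Metric.mem_closedBall, Real.dist_eq, sub_zero] at this
    have h2 : |x| ≤ R := le_trans this (le_max_left _ _)
    rw [abs_le] at h2
    exact ⟨h2.1, h2.2⟩
  have hμIcc : μ (Set.Icc (-R) R)ᶜ = 0 :=
    measure_mono_null (Set.compl_subset_compl.mpr hKR) hμsupp
  have hμae : ∀ᵐ x ∂μ, x ∈ Set.Icc (-R) R := by
    rw [MeasureTheory.ae_iff]
    exact hμIcc
  -- integrability of monomials w.r.t. μ
  have hμint : ∀ n : ℕ, Integrable (fun x : ℝ => x ^ n) μ := by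
    intro n
    refine Integrable.mono' (integrable_const (R ^ n))
      (measurable_id.pow_const n).aestronglyMeasurable ?_
    filter_upwards [hμae] with x hx
    have hxa : |x| ≤ R := abs_le.mpr ⟨hx.1, hx.2⟩
    calc ‖x ^ n‖ = |x| ^ n := by rw [Real.norm_eq_abs, abs_pow]
      _ ≤ R ^ n := pow_le_pow_left₀ (abs_nonneg x) hxa n
  -- ν is a finite measure
  haveI hνfin : IsFiniteMeasure ν := by
    have h0 := hν 0
    simp only [pow_zero] at h0
    rcases (integrable_const_iff (c := (1 : ℝ))).mp h0 with h | h
    · exact absurd h one_ne_zero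
    · exact h
  -- ν gives no mass outside `Icc (-R) R`
  have hkey : ∀ t : ℝ, R < t → ν {x : ℝ | t ≤ |x|} = 0 := by
    intro t ht
    set A : Set ℝ := {x : ℝ | t ≤ |x|} with hAdef
    have hAclosed : IsClosed A := isClosed_le continuous_const continuous_abs
    have hAmeas : MeasurableSet A := hAclosed.measurableSet
    have ht0 : (0 : ℝ) < t := lt_trans hR0 ht
    set M : ℝ := (μ Set.univ).toReal with hMdef
    have hbound : ∀ n : ℕ, (ν A).toReal ≤ (R / t) ^ (2 * n) * M := by
      intro n
      have h1 : t ^ (2 * n) * (ν A).toReal ≤ ∫ x in A, x ^ (2 * n) ∂ν := by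
        refine setIntegral_ge_of_const_le_real hAmeas (measure_ne_top ν A) (fun x hx => ?_)
          (hν (2 * n)).integrableOn
        have hx' : t ≤ |x| := hx
        calc t ^ (2 * n) ≤ |x| ^ (2 * n) := pow_le_pow_left₀ ht0.le hx' _
          _ = x ^ (2 * n) := (even_two_mul n).pow_abs x
      have h2 : ∫ x in A, x ^ (2 * n) ∂ν ≤ ∫ x, x ^ (2 * n) ∂ν :=
        setIntegral_le_integral (hν (2 * n))
          (Filter.Eventually.of_forall fun x => (even_two_mul n).pow_nonneg x)
      have h3 : ∫ x, x ^ (2 * n) ∂μ ≤ R ^ (2 * n) * M := by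
        have := norm_integral_le_of_norm_le_const (μ := μ) (f := fun x : ℝ => x ^ (2 * n))
          (C := R ^ (2 * n)) ?_
        · exact le_trans (le_abs_self _) this
        · filter_upwards [hμae] with x hx
          have hxa : |x| ≤ R := abs_le.mpr ⟨hx.1, hx.2⟩
          calc ‖x ^ (2 * n)‖ = |x| ^ (2 * n) := by rw [Real.norm_eq_abs, abs_pow]
            _ ≤ R ^ (2 * n) := pow_le_pow_left₀ (abs_nonneg x) hxa _
      have h4 : t ^ (2 * n) * (ν A).toReal ≤ R ^ (2 * n) * M := by
        calc t ^ (2 * n) * (ν A).toReal ≤ ∫ x in A, x ^ (2 * n) ∂ν := h1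
          _ ≤ ∫ x, x ^ (2 * n) ∂ν := h2
          _ = ∫ x, x ^ (2 * n) ∂μ := (heq (2 * n)).symm
          _ ≤ R ^ (2 * n) * M := h3
      rw [div_pow, div_mul_eq_mul_div, le_div_iff₀ (pow_pos ht0 _)]
      linarith [h4]
    have hlim : Filter.Tendsto (fun n : ℕ => (R / t) ^ (2 * n) * M) Filter.atTop (nhds 0) := by
      have hq : |(R / t) ^ 2| < 1 := by
        rw [abs_of_nonneg (sq_nonneg _)]
        have : R / t < 1 := (div_lt_one ht0).mpr ht
        calc (R / t) ^ 2 ≤ (R / t) ^ 1 :=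
              pow_le_pow_of_le_one (div_nonneg hR0.le ht0.le) this.le one_le_two
          _ = R / t := pow_one _
          _ < 1 := this
      have h5 : Filter.Tendsto (fun n : ℕ => ((R / t) ^ 2) ^ n * M) Filter.atTop (nhds (0 * M)) :=
        Filter.Tendsto.mul_const M (tendsto_pow_atTop_nhds_zero_of_lt_one
          (sq_nonneg _) (lt_of_abs_lt hq))
      rw [zero_mul] at h5
      convert h5 using 2 with n
      rw [← pow_mul, mul_comm 2 n]
    have hle : (ν A).toReal ≤ 0 := ge_of_tendsto' hlim hbound
    have : (ν A).toReal = 0 := le_antisymm hle ENNReal.toReal_nonneg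
    rcases ENNReal.toReal_eq_zero_iff _ |>.mp this with h | h
    · exact h
    · exact absurd h (measure_ne_top ν A)
  have hνIcc : ν (Set.Icc (-R) R)ᶜ = 0 := by
    have hsub : (Set.Icc (-R) R)ᶜ ⊆ ⋃ m : ℕ, {x : ℝ | R + 1 / (m + 1) ≤ |x|} := by
      intro x hx
      have hxR : R < |x| := by
        rw [Set.mem_compl_iff, Set.mem_Icc, not_and_or, not_le, not_le] at hx
        rw [lt_abs]
        rcases hx with h | h
        · right; linarith
        · left; exact h
      obtain ⟨m, hm⟩ := exists_nat_one_div_lt (ε := |x| - R) (by linarith)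
      exact Set.mem_iUnion.mpr ⟨m, by simp only [Set.mem_setOf_eq]; push_cast; linarith⟩
    refine measure_mono_null hsub (measure_iUnion_null fun m => hkey _ ?_)
    have : (0 : ℝ) < 1 / ((m : ℝ) + 1) := by positivity
    linarith
  have hνae : ∀ᵐ x ∂ν, x ∈ Set.Icc (-R) R := by
    rw [MeasureTheory.ae_iff]
    exact hνIcc
  -- equality of integrals of polynomials
  have hIμ : ∀ p : Polynomial ℝ, Integrable (fun x => p.eval x) μ := by
    intro p
    simp_rw [Polynomial.eval_eq_sum_range]
    exact integrable_finset_sum _ fun i _ => (hμint i).const_mul _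
  have hIν : ∀ p : Polynomial ℝ, Integrable (fun x => p.eval x) ν := by
    intro p
    simp_rw [Polynomial.eval_eq_sum_range]
    exact integrable_finset_sum _ fun i _ => (hν i).const_mul _
  have hpoly : ∀ p : Polynomial ℝ, ∫ x, p.eval x ∂μ = ∫ x, p.eval x ∂ν := by
    intro p
    simp_rw [Polynomial.eval_eq_sum_range]
    rw [integral_finset_sum _ fun i _ => (hμint i).const_mul _,
      integral_finset_sum _ fun i _ => (hν i).const_mul _]
    refine Finset.sum_congr rfl fun i _ => ?_
    rw [integral_const_mul, integral_const_mul, heq i]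
  -- equality of integrals of continuous integrable functions
  have hcont : ∀ g : ℝ → ℝ, Continuous g → Integrable g μ → Integrable g ν →
      ∫ x, g x ∂μ = ∫ x, g x ∂ν := by
    intro g hg hgμ hgν
    set D : ℝ := (∫ x, g x ∂μ) - ∫ x, g x ∂ν with hDdef
    set Mμ : ℝ := (μ Set.univ).toReal with hMμ
    set Mν : ℝ := (ν Set.univ).toReal with hMν
    have habs : ∀ ε : ℝ, 0 < ε → |D| ≤ ε * (Mμ + Mν) := by
      intro ε hε
      obtain ⟨p, hp⟩ := exists_polynomial_near_of_continuousOn (-R) R g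
        hg.continuousOn ε hε
      have e1 : ∫ x, g x ∂μ - ∫ x, p.eval x ∂μ = ∫ x, (g x - p.eval x) ∂μ :=
        (integral_sub hgμ (hIμ p)).symm
      have e2 : ∫ x, g x ∂ν - ∫ x, p.eval x ∂ν = ∫ x, (g x - p.eval x) ∂ν :=
        (integral_sub hgν (hIν p)).symm
      have b1 : |∫ x, (g x - p.eval x) ∂μ| ≤ ε * Mμ := by
        rw [← Real.norm_eq_abs]
        refine norm_integral_le_of_norm_le_const ?_
        filter_upwards [hμae] with x hx
        rw [Real.norm_eq_abs, abs_sub_comm]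
        exact (hp x hx).le
      have b2 : |∫ x, (g x - p.eval x) ∂ν| ≤ ε * Mν := by
        rw [← Real.norm_eq_abs]
        refine norm_integral_le_of_norm_le_const ?_
        filter_upwards [hνae] with x hx
        rw [Real.norm_eq_abs, abs_sub_comm]
        exact (hp x hx).le
      have hD : D = (∫ x, (g x - p.eval x) ∂μ) - ∫ x, (g x - p.eval x) ∂ν := by
        rw [← e1, ← e2, hpoly p]
        ring
      calc |D| ≤ |∫ x, (g x - p.eval x) ∂μ| + |∫ x, (g x - p.eval x) ∂ν| := by
            rw [hD]; exact abs_sub _ _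
        _ ≤ ε * Mμ + ε * Mν := add_le_add b1 b2
        _ = ε * (Mμ + Mν) := by ring
    have hD0 : |D| ≤ 0 := by
      refine le_of_forall_pos_le_add fun ε hε => ?_
      have hpos : (0 : ℝ) < ε / (Mμ + Mν + 1) := by
        apply div_pos hε
        have : (0 : ℝ) ≤ Mμ := ENNReal.toReal_nonneg
        have : (0 : ℝ) ≤ Mν := ENNReal.toReal_nonneg
        positivity
      have h := habs _ hpos
      have hMsum : (0 : ℝ) ≤ Mμ + Mν := by
        have h1 : (0 : ℝ) ≤ Mμ := ENNReal.toReal_nonneg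
        have h2 : (0 : ℝ) ≤ Mν := ENNReal.toReal_nonneg
        linarith
      have : ε / (Mμ + Mν + 1) * (Mμ + Mν) ≤ ε := by
        rw [div_mul_eq_mul_div, div_le_iff₀ (by linarith)]
        nlinarith
      linarith
    have : D = 0 := abs_nonpos_iff.mp hD0
    linarith [this]
  -- conclude via bounded continuous functions
  refine ext_of_forall_lintegral_eq_of_IsFiniteMeasure fun f => ?_
  have hfinμ : ∫⁻ x, (f x : ENNReal) ∂μ ≠ ⊤ :=
    (BoundedContinuousFunction.lintegral_lt_top_of_nnreal μ f).ne
  have hfinν : ∫⁻ x, (f x : ENNReal) ∂ν ≠ ⊤ :=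
    (BoundedContinuousFunction.lintegral_lt_top_of_nnreal ν f).ne
  rw [← ENNReal.toReal_eq_toReal_iff' hfinμ hfinν,
    BoundedContinuousFunction.toReal_lintegral_coe_eq_integral,
    BoundedContinuousFunction.toReal_lintegral_coe_eq_integral]
  exact hcont (fun x => (f x : ℝ)) (NNReal.continuous_coe.comp f.continuous)
    (BoundedContinuousFunction.integrable_of_nnreal μ f)
    (BoundedContinuousFunction.integrable_of_nnreal ν f)
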